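/- Let V be a 2n-dimensional symplectic vector space with symplectic form Ω, let π : V → Q be a linear surjection onto an n-dimensional space whose kernel F = ker π is Lagrangian, and let W ⊆ V be a subspace with dim W = 2l such that Ω is nondegenerate on W and dim π(W) = l. Then dim(W ∩ F) = l, and inside F the subspaces W ∩ F and the preimage in F of the annihilator Ann(π(W)) ⊆ Q* (under the isomorphism F ≅ Q* induced by Ω) are transversal, i.e., their sum is all of F. -/

import Mathlib

/-- Linear-algebra content of the focusing construction. For a symplectic
vector space `(V, Ω)` of dimension `2n`, a linear surjection `π : V → Q` onto an
`n`-dimensional space with Lagrangian kernel `F = ker π`, and a subspace `W ⊆ V` with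
`dim W = 2l`, `Ω` nondegenerate on `W`, `dim π(W) = l`: one has `dim (W ∩ F) = l`, and
inside `F` the subspaces `W ∩ F` and `F ∩ W^⊥` (which corresponds to the preimage of
`Ann(π(W))` under the isomorphism `F ≅ Q*` induced by `Ω`) are transversal, i.e. their
sum is all of `F`. -/
theorem stmt_4 (V Q : Type*) [AddCommGroup V] [Module ℝ V] [FiniteDimensional ℝ V]
    [AddCommGroup Q] [Module ℝ Q] [FiniteDimensional ℝ Q]
    (n l : ℕ) (Ω : V →ₗ[ℝ] V →ₗ[ℝ] ℝ)
    (hΩalt : ∀ v : V, Ω v v = 0)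
    (hΩnd : ∀ v : V, (∀ u : V, Ω v u = 0) → v = 0)
    (hV : Module.finrank ℝ V = 2 * n)
    (π : V →ₗ[ℝ] Q) (hπ : Function.Surjective π)
    (hQ : Module.finrank ℝ Q = n)
    (hLag : ∀ v ∈ LinearMap.ker π, ∀ u ∈ LinearMap.ker π, Ω v u = 0)
    (W : Submodule ℝ V) (hWdim : Module.finrank ℝ W = 2 * l)
    (hWnd : ∀ w ∈ W, (∀ w' ∈ W, Ω w w' = 0) → w = 0)
    (hπW : Module.finrank ℝ (W.map π) = l) :
    Module.finrank ℝ ↥(W ⊓ LinearMap.ker π) = l ∧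
      ∀ v ∈ LinearMap.ker π, ∃ a ∈ LinearMap.ker π,
        (∀ w ∈ W, Ω a w = 0) ∧ ∃ u ∈ W ⊓ LinearMap.ker π, v = a + u := by
  classical
  set F := LinearMap.ker π with hF
  set O := LinearMap.BilinForm.orthogonal Ω with hO
  have hAlt : LinearMap.IsAlt Ω := hΩalt
  have hRefl : LinearMap.IsRefl Ω := hAlt.isRefl
  have hNd : LinearMap.BilinForm.Nondegenerate Ω :=
    ⟨fun v h => hΩnd v h, fun v h => hΩnd v fun u => hRefl u v (h u)⟩
  -- dim F = n
  have hrange : LinearMap.range π = ⊤ := LinearMap.range_eq_top.mpr hπ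
  have hFdim : Module.finrank ℝ F = n := by
    have := LinearMap.finrank_range_add_finrank_ker π
    rw [hrange, finrank_top, ← hF] at this
    omega
  -- dim (W ⊓ F) = l
  have hWF : Module.finrank ℝ ↥(W ⊓ F) = l := by
    have h1 := LinearMap.finrank_range_add_finrank_ker (π.domRestrict W)
    have h2 : LinearMap.range (π.domRestrict W) = W.map π := by
      ext q
      simp [LinearMap.mem_range, Submodule.mem_map]
    have h3 : LinearMap.ker (π.domRestrict W) = (W ⊓ F).comap W.subtype := by
      ext ⟨x, hx⟩
      simp [hF, hx]
    have h4 : Module.finrank ℝ ((W ⊓ F).comap W.subtype) = Module.finrank ℝ ↥(W ⊓ F) := by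
      rw [(Submodule.comapSubtypeEquivOfLe inf_le_left).finrank_eq]
    rw [h2, h3, h4, hπW, hWdim] at h1
    omega
  refine ⟨hWF, ?_⟩
  -- orthogonal of F equals F
  have hFle : F ≤ O F := fun v hv u hu => hLag u hu v hv
  have hFdim' : Module.finrank ℝ (O F) = n := by
    rw [LinearMap.BilinForm.finrank_orthogonal (B := Ω) hNd, hV, hFdim]
    omega
  have hForth : O F = F :=
    (Submodule.eq_of_le_of_finrank_le hFle (by rw [hFdim, hFdim'])).symm
  -- W ⊓ orthogonal W = ⊥
  have hWdisj : W ⊓ O W = ⊥ := by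
    rw [eq_bot_iff]
    rintro x ⟨hxW, hxO⟩
    exact hWnd x hxW fun w' hw' => hRefl w' x (hxO w' hw')
  -- dim (F ⊓ orthogonal W)
  have hsupdim : Module.finrank ℝ ↥(F ⊔ W) = n + l := by
    have := Submodule.finrank_sup_add_finrank_inf_eq F W
    rw [hFdim, hWdim, inf_comm, hWF] at this
    omega
  have horthsup : O (F ⊔ W) = F ⊓ O W := by
    ext x
    constructor
    · intro hx
      refine ⟨?_, fun w hw => hx w (Submodule.mem_sup_right hw)⟩
      rw [← hForth]
      exact fun v hv => hx v (Submodule.mem_sup_left hv)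
    · rintro ⟨hxF, hxO⟩ v hv
      rcases Submodule.mem_sup.mp hv with ⟨f, hf, w, hw, rfl⟩
      have h1 : Ω f x = 0 := by rw [← hForth] at hxF; exact hxF f hf
      have h2 : Ω w x = 0 := hxO w hw
      simp [LinearMap.BilinForm.IsOrtho, h1, h2]
  have hln : l ≤ n := by
    have := Submodule.finrank_le (F ⊔ W)
    rw [hsupdim, hV] at this
    omega
  have hFOdim : Module.finrank ℝ ↥(F ⊓ O W) = n - l := by
    rw [← horthsup, LinearMap.BilinForm.finrank_orthogonal (B := Ω) hNd, hsupdim, hV]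
    omega
  -- the sum is all of F
  have hsum : (W ⊓ F) ⊔ (F ⊓ O W) = F := by
    apply Submodule.eq_of_le_of_finrank_le (sup_le inf_le_right inf_le_left)
    have hdisj : (W ⊓ F) ⊓ (F ⊓ O W) = ⊥ := by
      rw [eq_bot_iff]
      rintro x ⟨⟨hxW, _⟩, ⟨_, hxO⟩⟩
      have : x ∈ W ⊓ O W := ⟨hxW, hxO⟩
      rwa [hWdisj] at this
    have := Submodule.finrank_sup_add_finrank_inf_eq (W ⊓ F) (F ⊓ O W)
    rw [hdisj, finrank_bot, hWF, hFOdim] at this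
    rw [hFdim]
    omega
  intro v hv
  have hv' : v ∈ (W ⊓ F) ⊔ (F ⊓ O W) := by rw [hsum]; exact hv
  rcases Submodule.mem_sup.mp hv' with ⟨u, hu, a, ha, rfl⟩
  exact ⟨a, ha.1, fun w hw => hRefl w a (ha.2 w hw), u, hu, add_comm u a⟩
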